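/- In the plane (d = 2), no line simultaneously intersects all three open regions R_1 = {x > 0 ∧ y < 0 ∧ x + y > 1}, R_2 = {x < 0 ∧ y > 0 ∧ x + y > 1}, and R_3 = {x < 0 ∧ y < 0}. -/

import Mathlib

/-- A line in `ℝ²`: a nonempty affine subspace of dimension `1`. -/
def IsLine (f : AffineSubspace ℝ (EuclideanSpace ℝ (Fin 2))) : Prop :=
  (f : Set (EuclideanSpace ℝ (Fin 2))).Nonempty ∧ Module.finrank ℝ f.direction = 1

theorem stmt_2 (f : AffineSubspace ℝ (EuclideanSpace ℝ (Fin 2))) (hf : IsLine f) :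
    ¬ ((∃ x ∈ (f : Set (EuclideanSpace ℝ (Fin 2))), 0 < x 0 ∧ x 1 < 0 ∧ 1 < x 0 + x 1) ∧
       (∃ x ∈ (f : Set (EuclideanSpace ℝ (Fin 2))), x 0 < 0 ∧ 0 < x 1 ∧ 1 < x 0 + x 1) ∧
       (∃ x ∈ (f : Set (EuclideanSpace ℝ (Fin 2))), x 0 < 0 ∧ x 1 < 0)) := by
  rintro ⟨⟨a, ha, ha0, ha1, has⟩, ⟨b, hb, hb0, hb1, hbs⟩, ⟨c, hc, hc0, hc1⟩⟩
  obtain ⟨-, hdim⟩ := hf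
  rw [finrank_eq_one_iff'] at hdim
  obtain ⟨v0, hv0, hspan⟩ := hdim
  have hv : b -ᵥ a ∈ f.direction := AffineSubspace.vsub_mem_direction hb ha
  have hw : c -ᵥ a ∈ f.direction := AffineSubspace.vsub_mem_direction hc ha
  obtain ⟨s, hs⟩ := hspan ⟨b -ᵥ a, hv⟩
  obtain ⟨r, hr⟩ := hspan ⟨c -ᵥ a, hw⟩
  have hs0 : s ≠ 0 := by
    rintro rfl
    have : (b : EuclideanSpace ℝ (Fin 2)) - a = 0 := by
      have := congrArg Subtype.val hs
      simpa [vsub_eq_sub] using this.symm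
    have h0 : b 0 - a 0 = 0 := by simpa using congrArg (fun v => v 0) this
    linarith
  set t : ℝ := r / s with ht
  have key : (c : EuclideanSpace ℝ (Fin 2)) - a = t • (b - a) := by
    have h1 : (⟨c -ᵥ a, hw⟩ : f.direction) = t • ⟨b -ᵥ a, hv⟩ := by
      rw [← hs, ← hr, smul_smul, div_mul_cancel₀ _ hs0]
    have := congrArg Subtype.val h1
    simpa [vsub_eq_sub] using this
  have h0 : c 0 - a 0 = t * (b 0 - a 0) := by
    have := congrArg (fun v => v 0) key
    simpa using this
  have h1 : c 1 - a 1 = t * (b 1 - a 1) := by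
    have := congrArg (fun v => v 1) key
    simpa using this
  rcases le_or_gt t 0 with h | h
  · nlinarith
  · rcases le_or_gt 1 t with h' | h'
    · nlinarith
    · nlinarith
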